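/- arXiv:2510.16527 — 3 statements merged into one kernel-verified Lean document; each statement's English description precedes it below -/
import Mathlib

section
/- Let n ≥ 2 be an integer, p ≠ 0 a real with p < n, μ ∈ ℝ and σ > 0. Let X and T be independent random variables with X ~ Exp(μ, σ/n) and T ~ Gamma(n−1, σ). For c ∈ ℝ with p·c < 1, the Linex risk at (μ, σ) of the estimator X + c·T is finite, and the function c ↦ Linex risk of X + c·T attains a strict global minimum on {c ∈ ℝ : p·c < 1} at c₀ = (1/p)·(1 − (n/(n−p))^{1/n}) (which satisfies p·c₀ < 1). Thus X + c₀·T is the best affine equivariant estimator of μ under Linex loss. -/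
open MeasureTheory ProbabilityTheory Real
open scoped ENNReal

/-- Two-parameter exponential distribution `Exp(μ, θ)` with location `μ` and scale `θ`. -/
noncomputable def expLocMeasure (μ θ : ℝ) : Measure ℝ :=
  volume.withDensity fun x =>
    ENNReal.ofReal (if μ < x then θ⁻¹ * Real.exp (-(x - μ) / θ) else 0)

/-- Gamma distribution `Gamma(a, θ)` with shape `a` and scale `θ`. -/
noncomputable def gammaScaleMeasure (a θ : ℝ) : Measure ℝ :=
  volume.withDensity fun x =>
    ENNReal.ofReal (if 0 < x then x ^ (a - 1) * Real.exp (-x / θ) / (Real.Gamma a * θ ^ a) else 0)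

/-- The Linex loss `e^{pt} - pt - 1`. -/
noncomputable def linexLoss (p t : ℝ) : ℝ := Real.exp (p * t) - p * t - 1

/-- The Linex risk of an estimator `δ` of a location parameter `μ` at scale `σ`,
with values in `[0, ∞]`. -/
noncomputable def linexRisk {Ω : Type*} [MeasurableSpace Ω] (P : Measure Ω)
    (p μ σ : ℝ) (δ : Ω → ℝ) : ℝ≥0∞ :=
  ∫⁻ ω, ENNReal.ofReal (linexLoss p ((δ ω - μ) / σ)) ∂P

section LinexAux
open Set Filter

lemma gammaDens_meas (a θ : ℝ) : Measurable
    (fun x : ℝ => if 0 < x then x ^ (a - 1) * Real.exp (-x / θ) / (Real.Gamma a * θ ^ a) else 0) := by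
  refine Measurable.ite measurableSet_Ioi ?_ measurable_const
  fun_prop

lemma gammaDens_nonneg {a θ : ℝ} (ha : 0 < a) (hθ : 0 < θ) (x : ℝ) :
    0 ≤ if 0 < x then x ^ (a - 1) * Real.exp (-x / θ) / (Real.Gamma a * θ ^ a) else 0 := by
  split
  · exact div_nonneg (mul_nonneg (Real.rpow_nonneg (by linarith) _) (Real.exp_pos _).le)
      (mul_nonneg (Real.Gamma_pos_of_pos ha).le (Real.rpow_nonneg hθ.le _))
  · exact le_rfl

-- reduction of integrals over gammaScaleMeasure to set integrals on Ioi 0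

lemma gammaScale_ind (a θ : ℝ) (g : ℝ → ℝ) :
    (fun x => (if 0 < x then x ^ (a - 1) * Real.exp (-x / θ) / (Real.Gamma a * θ ^ a) else 0) * g x)
      = (Ioi (0:ℝ)).indicator
        (fun x => x ^ (a - 1) * Real.exp (-x / θ) / (Real.Gamma a * θ ^ a) * g x) := by
  ext x
  simp only [indicator_apply, mem_Ioi, ite_mul, zero_mul]

lemma withDensity_real_integrable_iff {ρ : ℝ → ℝ} (hm : Measurable ρ) (h0 : ∀ x, 0 ≤ ρ x)
    (g : ℝ → ℝ) :
    Integrable g (volume.withDensity fun x => ENNReal.ofReal (ρ x)) ↔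
      Integrable (fun x => ρ x * g x) volume := by
  rw [integrable_withDensity_iff (by fun_prop)
    (Filter.Eventually.of_forall fun x => ENNReal.ofReal_lt_top)]
  refine integrable_congr (Filter.Eventually.of_forall fun x => ?_)
  simp only [ENNReal.toReal_ofReal (h0 x), mul_comm]

lemma withDensity_real_integral {ρ : ℝ → ℝ} (hm : Measurable ρ) (h0 : ∀ x, 0 ≤ ρ x)
    (g : ℝ → ℝ) :
    ∫ x, g x ∂(volume.withDensity fun x => ENNReal.ofReal (ρ x)) = ∫ x, ρ x * g x := by
  have : (fun x => ENNReal.ofReal (ρ x)) = fun x => (((ρ x).toNNReal : NNReal) : ENNReal) := by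
    ext x; rfl
  rw [this, integral_withDensity_eq_integral_smul (by fun_prop) g]
  refine integral_congr_ae (Filter.Eventually.of_forall fun x => ?_)
  simp [NNReal.smul_def, Real.coe_toNNReal _ (h0 x)]

lemma gamma_core_integrableOn {a r : ℝ} (ha : 0 < a) (hr : 0 < r) :
    IntegrableOn (fun x : ℝ => x ^ (a - 1) * Real.exp (-(r * x))) (Ioi 0) := by
  have := integrableOn_rpow_mul_exp_neg_mul_rpow (s := a - 1) (p := 1) (b := r)
    (by linarith) one_pos hr
  simpa [Real.rpow_one] using this

lemma gamma_core_value {a r : ℝ} (ha : 0 < a) (hr : 0 < r) :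
    ∫ x in Ioi 0, x ^ (a - 1) * Real.exp (-(r * x)) = (1 / r) ^ a * Real.Gamma a :=
  integral_rpow_mul_exp_neg_mul_Ioi ha hr

lemma gammaScale_exp {a σ b : ℝ} (ha : 0 < a) (hσ : 0 < σ) (hb : b * σ < 1) :
    Integrable (fun x => Real.exp (b * x)) (gammaScaleMeasure a σ) ∧
    ∫ x, Real.exp (b * x) ∂(gammaScaleMeasure a σ) = (1 - b * σ) ^ (-a) := by
  have hσ' : σ ≠ 0 := hσ.ne'
  set r : ℝ := σ⁻¹ - b with hr_def
  have hr : 0 < r := by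
    have : b < σ⁻¹ := by rwa [← one_div, lt_div_iff₀ hσ]
    simpa [hr_def, sub_pos]
  have hΓ : 0 < Real.Gamma a := Real.Gamma_pos_of_pos ha
  have hσa : 0 < σ ^ a := Real.rpow_pos_of_pos hσ a
  have hpt : ∀ x : ℝ, x ^ (a - 1) * Real.exp (-x / σ) / (Real.Gamma a * σ ^ a) * Real.exp (b * x)
      = (Real.Gamma a * σ ^ a)⁻¹ * (x ^ (a - 1) * Real.exp (-(r * x))) := by
    intro x
    have hexp : Real.exp (-x / σ) * Real.exp (b * x) = Real.exp (-(r * x)) := by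
      rw [← Real.exp_add]; congr 1; rw [hr_def]; field_simp; ring
    rw [div_mul_eq_mul_div, mul_assoc, hexp]; ring
  have hint : IntegrableOn
      (fun x => x ^ (a - 1) * Real.exp (-x / σ) / (Real.Gamma a * σ ^ a) * Real.exp (b * x))
      (Ioi (0:ℝ)) := by
    refine IntegrableOn.congr_fun ((gamma_core_integrableOn ha hr).const_mul
      ((Real.Gamma a * σ ^ a)⁻¹)) (fun x _ => (hpt x).symm) measurableSet_Ioi
  constructor
  · rw [gammaScaleMeasure, withDensity_real_integrable_iff (gammaDens_meas a σ)
      (gammaDens_nonneg ha hσ), gammaScale_ind, integrable_indicator_iff measurableSet_Ioi]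
    exact hint
  · rw [gammaScaleMeasure, withDensity_real_integral (gammaDens_meas a σ)
      (gammaDens_nonneg ha hσ), gammaScale_ind, integral_indicator measurableSet_Ioi]
    rw [setIntegral_congr_fun measurableSet_Ioi (fun x _ => hpt x),
      integral_const_mul, gamma_core_value ha hr]
    have hrσ : r * σ = 1 - b * σ := by rw [hr_def]; field_simp
    rw [← hrσ, Real.rpow_neg (mul_pos hr hσ).le, Real.mul_rpow hr.le hσ.le,
      one_div, Real.inv_rpow hr.le]
    have h1 : r ^ a ≠ 0 := (Real.rpow_pos_of_pos hr a).ne'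
    field_simp

lemma gammaScale_mean {a σ : ℝ} (ha : 0 < a) (hσ : 0 < σ) :
    Integrable (fun x : ℝ => x) (gammaScaleMeasure a σ) ∧
    ∫ x, x ∂(gammaScaleMeasure a σ) = a * σ := by
  have hσ' : σ ≠ 0 := hσ.ne'
  have hΓ : 0 < Real.Gamma a := Real.Gamma_pos_of_pos ha
  have hσa : 0 < σ ^ a := Real.rpow_pos_of_pos hσ a
  have hσi : 0 < σ⁻¹ := inv_pos.mpr hσ
  have hpt : ∀ x ∈ Ioi (0:ℝ),
      x ^ (a - 1) * Real.exp (-x / σ) / (Real.Gamma a * σ ^ a) * x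
      = (Real.Gamma a * σ ^ a)⁻¹ * (x ^ (a + 1 - 1) * Real.exp (-(σ⁻¹ * x))) := by
    intro x hx
    have hx0 : x ≠ 0 := (mem_Ioi.mp hx).ne'
    have h1 : x ^ (a + 1 - 1) = x ^ (a - 1) * x := by
      rw [show a + 1 - 1 = (a - 1) + 1 by ring, Real.rpow_add_one hx0]
    have h2 : -x / σ = -(σ⁻¹ * x) := by field_simp
    rw [h1, h2]; ring
  have hint : IntegrableOn
      (fun x => x ^ (a - 1) * Real.exp (-x / σ) / (Real.Gamma a * σ ^ a) * x) (Ioi (0:ℝ)) := by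
    refine IntegrableOn.congr_fun ((gamma_core_integrableOn (by linarith) hσi).const_mul
      ((Real.Gamma a * σ ^ a)⁻¹)) (fun x hx => (hpt x hx).symm) measurableSet_Ioi
  constructor
  · rw [gammaScaleMeasure, withDensity_real_integrable_iff (gammaDens_meas a σ)
      (gammaDens_nonneg ha hσ), gammaScale_ind, integrable_indicator_iff measurableSet_Ioi]
    exact hint
  · rw [gammaScaleMeasure, withDensity_real_integral (gammaDens_meas a σ)
      (gammaDens_nonneg ha hσ), gammaScale_ind, integral_indicator measurableSet_Ioi]
    rw [setIntegral_congr_fun measurableSet_Ioi hpt, integral_const_mul,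
      gamma_core_value (by linarith : (0:ℝ) < a + 1) hσi]
    rw [one_div, inv_inv, Real.rpow_add_one hσ', Real.Gamma_add_one ha.ne']
    field_simp

lemma expDens_meas (μ θ : ℝ) :
    Measurable (fun x : ℝ => if μ < x then θ⁻¹ * Real.exp (-(x - μ) / θ) else 0) := by
  refine Measurable.ite measurableSet_Ioi ?_ measurable_const
  fun_prop

lemma expDens_nonneg {θ : ℝ} (hθ : 0 < θ) (μ : ℝ) (x : ℝ) :
    0 ≤ if μ < x then θ⁻¹ * Real.exp (-(x - μ) / θ) else 0 := by
  split
  · positivity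
  · exact le_rfl

lemma expLoc_shift (μ θ : ℝ) (g : ℝ → ℝ) :
    (fun x => (if μ < x then θ⁻¹ * Real.exp (-(x - μ) / θ) else 0) * g x)
    = fun x => ((Ioi (0:ℝ)).indicator (fun y => θ⁻¹ * Real.exp (-y / θ) * g (y + μ))) (x - μ) := by
  ext x
  simp only [indicator_apply, mem_Ioi, sub_pos, ite_mul, zero_mul, sub_add_cancel]

lemma expLoc_integrable_iff {θ : ℝ} (hθ : 0 < θ) (μ : ℝ) (g : ℝ → ℝ) :
    Integrable g (expLocMeasure μ θ) ↔
      IntegrableOn (fun y => θ⁻¹ * Real.exp (-y / θ) * g (y + μ)) (Ioi 0) := by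
  rw [expLocMeasure, withDensity_real_integrable_iff (expDens_meas μ θ) (expDens_nonneg hθ μ),
    expLoc_shift μ θ g]
  constructor
  · intro h
    have := h.comp_add_right μ
    simp only [add_sub_cancel_right] at this
    rwa [← integrable_indicator_iff measurableSet_Ioi]
  · intro h
    exact ((integrable_indicator_iff measurableSet_Ioi).mpr h).comp_sub_right μ

lemma expLoc_integral {θ : ℝ} (hθ : 0 < θ) (μ : ℝ) (g : ℝ → ℝ) :
    ∫ x, g x ∂(expLocMeasure μ θ) = ∫ y in Ioi 0, θ⁻¹ * Real.exp (-y / θ) * g (y + μ) := by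
  rw [expLocMeasure, withDensity_real_integral (expDens_meas μ θ) (expDens_nonneg hθ μ),
    expLoc_shift μ θ g, integral_sub_right_eq_self _ μ, integral_indicator measurableSet_Ioi]

lemma exp_core_integrableOn {r : ℝ} (hr : 0 < r) :
    IntegrableOn (fun y : ℝ => Real.exp (-(r * y))) (Ioi 0) := by
  have := gamma_core_integrableOn (a := 1) one_pos hr
  simpa [Real.rpow_zero] using this

lemma exp_core_value {r : ℝ} (hr : 0 < r) :
    ∫ y in Ioi 0, Real.exp (-(r * y)) = 1 / r := by
  have := gamma_core_value (a := 1) one_pos hr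
  simpa [Real.rpow_zero, Real.rpow_one, Real.Gamma_one] using this

lemma lin_core_integrableOn {r : ℝ} (hr : 0 < r) :
    IntegrableOn (fun y : ℝ => y * Real.exp (-(r * y))) (Ioi 0) := by
  have := gamma_core_integrableOn (a := 2) two_pos hr
  simpa [show (2:ℝ)-1 = 1 by norm_num, Real.rpow_one] using this

lemma lin_core_value {r : ℝ} (hr : 0 < r) :
    ∫ y in Ioi 0, y * Real.exp (-(r * y)) = 1 / (r * r) := by
  have := gamma_core_value (a := 2) two_pos hr
  rw [show (2:ℝ) - 1 = 1 by norm_num] at this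
  simp only [Real.rpow_one, Real.Gamma_two, mul_one] at this
  rw [this, show (2:ℝ) = ((2:ℕ):ℝ) by norm_num, Real.rpow_natCast]
  have hr' : r ≠ 0 := hr.ne'
  field_simp

lemma expLoc_exp {θ q : ℝ} (hθ : 0 < θ) (hq : q * θ < 1) (μ : ℝ) :
    Integrable (fun x => Real.exp (q * (x - μ))) (expLocMeasure μ θ) ∧
    ∫ x, Real.exp (q * (x - μ)) ∂(expLocMeasure μ θ) = (1 - q * θ)⁻¹ := by
  have hθ' : θ ≠ 0 := hθ.ne'
  set r : ℝ := θ⁻¹ - q with hr_def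
  have hr : 0 < r := by
    have : q < θ⁻¹ := by rwa [← one_div, lt_div_iff₀ hθ]
    simpa [hr_def, sub_pos]
  have hpt : ∀ y : ℝ, θ⁻¹ * Real.exp (-y / θ) * Real.exp (q * (y + μ - μ))
      = θ⁻¹ * Real.exp (-(r * y)) := by
    intro y
    rw [mul_assoc, ← Real.exp_add]
    congr 2
    rw [hr_def]; field_simp; ring
  constructor
  · rw [expLoc_integrable_iff hθ]
    exact IntegrableOn.congr_fun ((exp_core_integrableOn hr).const_mul θ⁻¹)
      (fun y _ => (hpt y).symm) measurableSet_Ioi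
  · rw [expLoc_integral hθ]
    rw [setIntegral_congr_fun measurableSet_Ioi (fun y _ => hpt y), integral_const_mul,
      exp_core_value hr]
    rw [hr_def]
    field_simp

lemma expLoc_mean {θ : ℝ} (hθ : 0 < θ) (μ : ℝ) :
    Integrable (fun x : ℝ => x) (expLocMeasure μ θ) ∧
    ∫ x, x ∂(expLocMeasure μ θ) = μ + θ := by
  have hθ' : θ ≠ 0 := hθ.ne'
  have hr : 0 < θ⁻¹ := inv_pos.mpr hθ
  have hpt : ∀ y : ℝ, θ⁻¹ * Real.exp (-y / θ) * (y + μ)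
      = θ⁻¹ * (y * Real.exp (-(θ⁻¹ * y))) + (θ⁻¹ * μ) * Real.exp (-(θ⁻¹ * y)) := by
    intro y
    have h2 : -y / θ = -(θ⁻¹ * y) := by field_simp
    rw [h2]; ring
  have hi1 : IntegrableOn (fun y : ℝ => θ⁻¹ * (y * Real.exp (-(θ⁻¹ * y)))) (Ioi 0) :=
    (lin_core_integrableOn hr).const_mul _
  have hi2 : IntegrableOn (fun y : ℝ => (θ⁻¹ * μ) * Real.exp (-(θ⁻¹ * y))) (Ioi 0) :=
    (exp_core_integrableOn hr).const_mul _
  constructor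
  · rw [expLoc_integrable_iff hθ]
    exact IntegrableOn.congr_fun (hi1.add hi2) (fun y _ => (hpt y).symm) measurableSet_Ioi
  · rw [expLoc_integral hθ]
    rw [setIntegral_congr_fun measurableSet_Ioi (fun y _ => hpt y), integral_add hi1 hi2,
      integral_const_mul, integral_const_mul, lin_core_value hr, exp_core_value hr]
    field_simp
    ring

lemma key_t {n : ℕ} (hn : 2 ≤ n) {t : ℝ} (ht : 0 < t) (ht1 : t ≠ 1) :
    (n : ℝ) * t ^ (n - 1) < ((n : ℝ) - 1) * t ^ n + 1 := by
  induction n, hn using Nat.le_induction with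
  | base =>
    have ht1' : t - 1 ≠ 0 := sub_ne_zero.mpr ht1
    have h : (0:ℝ) < (t - 1)^2 := by positivity
    norm_num
    nlinarith [h]
  | succ n hn ih =>
    have e1 : n + 1 - 1 = n := by omega
    have e2 : t ^ (n - 1) * t = t ^ n := by
      rw [← pow_succ]; congr 1; omega
    have e3 : t ^ n * t = t ^ (n + 1) := by rw [← pow_succ]
    have ihm := mul_lt_mul_of_pos_right ih ht
    have sign : 0 ≤ (t ^ n - 1) * (t - 1) := by
      rcases le_or_gt t 1 with h | h
      · have : t ^ n ≤ 1 := pow_le_one₀ ht.le h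
        nlinarith
      · have : 1 ≤ t ^ n := one_le_pow₀ h.le
        nlinarith
    rw [e1]
    push_cast
    nlinarith [ihm, sign, e2, e3]

lemma key_u {n : ℕ} (hn : 2 ≤ n) {u u₀ : ℝ} (hu : 0 < u) (hu₀ : 0 < u₀) (hne : u ≠ u₀) :
    (n : ℝ) * u ^ (n - 1) * u₀ < ((n : ℝ) - 1) * u ^ n + u₀ ^ n := by
  have ht : 0 < u / u₀ := div_pos hu hu₀
  have ht1 : u / u₀ ≠ 1 := by
    rw [Ne, div_eq_one_iff_eq hu₀.ne']; exact hne
  have key := key_t hn ht ht1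
  have h0 : (0:ℝ) < u₀ ^ n := pow_pos hu₀ n
  have e : u₀ ^ n = u₀ ^ (n - 1) * u₀ := by rw [← pow_succ]; congr 1; omega
  have hm := mul_lt_mul_of_pos_right key h0
  rw [div_pow, div_pow] at hm
  have h1 : 0 < u₀ ^ (n-1) := pow_pos hu₀ _
  calc (n : ℝ) * u ^ (n - 1) * u₀
      = (n:ℝ) * (u ^ (n-1) / u₀ ^ (n-1)) * u₀ ^ n := by
        rw [e]; field_simp
    _ < (((n : ℝ) - 1) * (u ^ n / u₀ ^ n) + 1) * u₀ ^ n := hm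
    _ = ((n : ℝ) - 1) * u ^ n + u₀ ^ n := by field_simp

lemma core_min {n : ℕ} (hn : 2 ≤ n) {u u₀ : ℝ} (hu : 0 < u) (hu₀ : 0 < u₀) (hne : u ≠ u₀) :
    u₀ ^ n * (u₀ ^ (n - 1))⁻¹ + ((n : ℝ) - 1) * u₀ <
      u₀ ^ n * (u ^ (n - 1))⁻¹ + ((n : ℝ) - 1) * u := by
  have hupow : 0 < u ^ (n - 1) := pow_pos hu _
  have h1 : 0 < u₀ ^ (n-1) := pow_pos hu₀ _
  have e : u₀ ^ n = u₀ ^ (n - 1) * u₀ := by rw [← pow_succ]; congr 1; omega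
  have e4 : u ^ n = u ^ (n-1) * u := by rw [← pow_succ]; congr 1; omega
  have key := key_u hn hu hu₀ hne
  refine (mul_lt_mul_iff_left₀ hupow).mp ?_
  have c1 : u₀ ^ n * (u₀ ^ (n - 1))⁻¹ = u₀ := by rw [e]; field_simp
  rw [c1, add_mul, add_mul, mul_assoc (u₀^n), inv_mul_cancel₀ hupow.ne', mul_one]
  nlinarith [key, e4]

lemma linexLoss_nonneg (p t : ℝ) : 0 ≤ linexLoss p t := by
  have := Real.add_one_le_exp (p * t)
  rw [linexLoss]; linarith

end LinexAux


/-- For `X ~ Exp(μ, σ/n)` and `T ~ Gamma(n-1, σ)` independent, the Linex risk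
of `X + c·T` is finite for all `c` with `p·c < 1`, and is uniquely minimized over this set at
`c₀ = (1/p)(1 - (n/(n-p))^{1/n})`; thus `X + c₀·T` is the best affine equivariant estimator. -/
theorem stmt_0 {Ω : Type*} [MeasurableSpace Ω] (P : Measure Ω) [IsProbabilityMeasure P]
    (n : ℕ) (hn : 2 ≤ n) (p : ℝ) (hp : p ≠ 0) (hpn : p < n)
    (μ σ : ℝ) (hσ : 0 < σ)
    (X T : Ω → ℝ) (hX : Measurable X) (hT : Measurable T)
    (hindep : IndepFun X T P)
    (hXlaw : Measure.map X P = expLocMeasure μ (σ / n))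
    (hTlaw : Measure.map T P = gammaScaleMeasure ((n : ℝ) - 1) σ) :
    (∀ c : ℝ, p * c < 1 →
      linexRisk P p μ σ (fun ω => X ω + c * T ω) ≠ ⊤) ∧
    p * ((1 / p) * (1 - ((n : ℝ) / ((n : ℝ) - p)) ^ ((1 : ℝ) / (n : ℝ)))) < 1 ∧
    (∀ c : ℝ, p * c < 1 →
      c ≠ (1 / p) * (1 - ((n : ℝ) / ((n : ℝ) - p)) ^ ((1 : ℝ) / (n : ℝ))) →
      linexRisk P p μ σ
          (fun ω => X ω +
            ((1 / p) * (1 - ((n : ℝ) / ((n : ℝ) - p)) ^ ((1 : ℝ) / (n : ℝ)))) * T ω) <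
        linexRisk P p μ σ (fun ω => X ω + c * T ω)) := by
  have hnpos : (0:ℝ) < n := by positivity
  have hn1 : (1:ℝ) ≤ (n:ℝ) := by exact_mod_cast Nat.one_le_of_lt hn
  have hn2 : (2:ℝ) ≤ (n:ℝ) := by exact_mod_cast hn
  have hnne : (n:ℝ) ≠ 0 := hnpos.ne'
  have hσ' : σ ≠ 0 := hσ.ne'
  set a : ℝ := (n:ℝ) - 1 with ha_def
  have ha : 0 < a := by rw [ha_def]; linarith
  have hθ : 0 < σ / (n:ℝ) := by positivity
  have hnp : 0 < (n:ℝ) - p := by linarith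
  -- the risk function
  set R : ℝ → ℝ := fun c =>
    (1 - p / n)⁻¹ * (1 - p * c) ^ (-a) - (p / n + p * c * a) - 1 with hR_def
  -- mean of X
  have meanX := expLoc_mean hθ μ
  have intX : Integrable X P := by
    have := (hXlaw ▸ meanX.1).comp_measurable hX
    simpa [Function.comp_def] using this
  have EX : ∫ ω, X ω ∂P = μ + σ / n := by
    rw [← meanX.2, ← hXlaw, integral_map hX.aemeasurable]
    exact aestronglyMeasurable_id
  have meanT := gammaScale_mean ha hσ
  have intT : Integrable T P := by
    have := (hTlaw ▸ meanT.1).comp_measurable hT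
    simpa [Function.comp_def] using this
  have ET : ∫ ω, T ω ∂P = a * σ := by
    rw [← meanT.2, ← hTlaw, integral_map hT.aemeasurable]
    exact aestronglyMeasurable_id
  -- main computation
  have key : ∀ c : ℝ, p * c < 1 →
      Integrable (fun ω => linexLoss p ((X ω + c * T ω - μ) / σ)) P ∧
      ∫ ω, linexLoss p ((X ω + c * T ω - μ) / σ) ∂P = R c := by
    intro c hc
    have hq : (p / σ) * (σ / n) < 1 := by
      rw [show (p / σ) * (σ / (n:ℝ)) = p / n by field_simp]
      rw [div_lt_one hnpos]; exact hpn
    have hb : (p * c / σ) * σ < 1 := by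
      rw [show (p * c / σ) * σ = p * c by field_simp]; exact hc
    have mgfX := expLoc_exp hθ hq μ
    have mgfT := gammaScale_exp ha hσ hb
    have cont1 : Continuous (fun x : ℝ => Real.exp ((p / σ) * (x - μ))) := by fun_prop
    have cont2 : Continuous (fun x : ℝ => Real.exp ((p * c / σ) * x)) := by fun_prop
    have I1P : Integrable (fun ω => Real.exp ((p / σ) * (X ω - μ))) P := by
      have := (hXlaw ▸ mgfX.1).comp_measurable hX
      simpa [Function.comp_def] using this
    have E1 : ∫ ω, Real.exp ((p / σ) * (X ω - μ)) ∂P = (1 - p / n)⁻¹ := by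
      rw [← integral_map hX.aemeasurable (cont1.aestronglyMeasurable), hXlaw, mgfX.2,
        show (p / σ) * (σ / (n:ℝ)) = p / n by field_simp]
    have I2P : Integrable (fun ω => Real.exp ((p * c / σ) * T ω)) P := by
      have := (hTlaw ▸ mgfT.1).comp_measurable hT
      simpa [Function.comp_def] using this
    have E2 : ∫ ω, Real.exp ((p * c / σ) * T ω) ∂P = (1 - p * c) ^ (-a) := by
      rw [← integral_map hT.aemeasurable (cont2.aestronglyMeasurable), hTlaw, mgfT.2,
        show (p * c / σ) * σ = p * c by field_simp]
    have hIndE : IndepFun (fun ω => Real.exp ((p / σ) * (X ω - μ)))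
        (fun ω => Real.exp ((p * c / σ) * T ω)) P :=
      hindep.comp cont1.measurable cont2.measurable
    have Imul : Integrable (fun ω => Real.exp ((p / σ) * (X ω - μ)) *
        Real.exp ((p * c / σ) * T ω)) P := by
      have := hIndE.integrable_mul I1P I2P
      exact this
    have Emul : ∫ ω, Real.exp ((p / σ) * (X ω - μ)) * Real.exp ((p * c / σ) * T ω) ∂P
        = (1 - p / n)⁻¹ * (1 - p * c) ^ (-a) := by
      rw [← E1, ← E2]
      exact IndepFun.integral_fun_mul_eq_mul_integral hIndE I1P.1 I2P.1
    have hfun : ∀ ω, linexLoss p ((X ω + c * T ω - μ) / σ)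
        = Real.exp ((p / σ) * (X ω - μ)) * Real.exp ((p * c / σ) * T ω)
          - ((p / σ) * (X ω - μ) + (p * c / σ) * T ω) - 1 := by
      intro ω
      have harg : p * ((X ω + c * T ω - μ) / σ)
          = (p / σ) * (X ω - μ) + (p * c / σ) * T ω := by field_simp; ring
      rw [linexLoss, harg, Real.exp_add]
    have hsub : Integrable (fun ω => X ω - μ) P := intX.sub (integrable_const μ)
    have h1 : Integrable (fun ω => (p / σ) * (X ω - μ)) P := hsub.const_mul _
    have h2 : Integrable (fun ω => (p * c / σ) * T ω) P := intT.const_mul _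
    have Ilin : Integrable (fun ω => (p / σ) * (X ω - μ) + (p * c / σ) * T ω) P := h1.add h2
    have hEsub : ∫ ω, (X ω - μ) ∂P = σ / n := by
      rw [integral_sub intX (integrable_const μ), integral_const, EX]
      simp
    have Elin : ∫ ω, ((p / σ) * (X ω - μ) + (p * c / σ) * T ω) ∂P
        = p / n + p * c * a := by
      rw [integral_add h1 h2, integral_const_mul, integral_const_mul, hEsub, ET]
      field_simp
    constructor
    · have IA : Integrable (fun ω => Real.exp ((p / σ) * (X ω - μ)) *
          Real.exp ((p * c / σ) * T ω) - ((p / σ) * (X ω - μ) + (p * c / σ) * T ω)) P :=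
        Imul.sub Ilin
      have IB : Integrable (fun ω => Real.exp ((p / σ) * (X ω - μ)) *
          Real.exp ((p * c / σ) * T ω) - ((p / σ) * (X ω - μ) + (p * c / σ) * T ω) - 1) P :=
        IA.sub (integrable_const 1)
      exact IB.congr (Filter.Eventually.of_forall fun ω => (hfun ω).symm)
    · have IA : Integrable (fun ω => Real.exp ((p / σ) * (X ω - μ)) *
          Real.exp ((p * c / σ) * T ω) - ((p / σ) * (X ω - μ) + (p * c / σ) * T ω)) P :=
        Imul.sub Ilin
      rw [integral_congr_ae (Filter.Eventually.of_forall hfun),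
        integral_sub IA (integrable_const 1), integral_sub Imul Ilin,
        Emul, Elin, integral_const]
      simp only [measure_univ, probReal_univ, ENNReal.toReal_one, one_smul, smul_eq_mul, mul_one]
      rfl
  -- risk identity
  have risk_eq : ∀ c : ℝ, p * c < 1 →
      linexRisk P p μ σ (fun ω => X ω + c * T ω) = ENNReal.ofReal (R c) := by
    intro c hc
    rw [linexRisk, ← (key c hc).2,
      ofReal_integral_eq_lintegral_ofReal (key c hc).1
        (Filter.Eventually.of_forall fun ω => linexLoss_nonneg _ _)]
  have Rnonneg : ∀ c : ℝ, p * c < 1 → 0 ≤ R c := by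
    intro c hc
    rw [← (key c hc).2]
    exact integral_nonneg fun ω => linexLoss_nonneg _ _
  -- minimizer facts
  set u₀ : ℝ := ((n : ℝ) / ((n : ℝ) - p)) ^ ((1 : ℝ) / (n : ℝ)) with hu₀_def
  set c₀ : ℝ := (1 / p) * (1 - u₀) with hc₀_def
  have hbase : (0:ℝ) < (n:ℝ) / ((n:ℝ) - p) := div_pos hnpos hnp
  have hu₀pos : 0 < u₀ := Real.rpow_pos_of_pos hbase _
  have hpc₀ : 1 - p * c₀ = u₀ := by rw [hc₀_def, ← mul_assoc, mul_one_div_cancel hp, one_mul]; ring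
  have hc₀lt : p * c₀ < 1 := by linarith
  have hu₀pow : u₀ ^ n = (1 - p / n)⁻¹ := by
    rw [hu₀_def, ← Real.rpow_natCast (((n : ℝ) / ((n : ℝ) - p)) ^ ((1 : ℝ) / (n : ℝ))) n,
      ← Real.rpow_mul hbase.le, one_div, inv_mul_cancel₀ hnne, Real.rpow_one]
    rw [show (1 : ℝ) - p / n = ((n:ℝ) - p) / n by field_simp]
    rw [inv_div]
  -- rewrite R in nat-power form
  have hcast : ((n - 1 : ℕ) : ℝ) = a := by
    rw [ha_def]; push_cast [Nat.cast_sub (by omega : 1 ≤ n)]; ring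
  have Rform : ∀ c : ℝ, p * c < 1 →
      R c = u₀ ^ n * ((1 - p * c) ^ (n - 1 : ℕ))⁻¹ + a * (1 - p * c) - a - p / n - 1 := by
    intro c hc
    have hu : 0 < 1 - p * c := by linarith
    rw [hR_def]
    simp only
    rw [Real.rpow_neg hu.le, ← hcast, Real.rpow_natCast, hu₀pow]
    ring
  -- strict minimization
  have Rmin : ∀ c : ℝ, p * c < 1 → c ≠ c₀ → R c₀ < R c := by
    intro c hc hne
    have hu : 0 < 1 - p * c := by linarith
    have hune : 1 - p * c ≠ u₀ := by
      rw [← hpc₀]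
      intro h
      exact hne (mul_left_cancel₀ hp (by linarith))
    rw [Rform c hc, Rform c₀ hc₀lt, hpc₀]
    have := core_min hn hu hu₀pos hune
    rw [← ha_def] at this
    nlinarith [this]
  refine ⟨fun c hc => by rw [risk_eq c hc]; exact ENNReal.ofReal_ne_top, hc₀lt, ?_⟩
  intro c hc hne
  rw [risk_eq c hc, risk_eq c₀ hc₀lt]
  have hlt : R c₀ < R c := Rmin c hc hne
  exact (ENNReal.ofReal_lt_ofReal_iff (lt_of_le_of_lt (Rnonneg c₀ hc₀lt) hlt)).mpr hlt
end

section
/- Let n be a positive integer, σ > 0, μ ∈ ℝ, and p ≠ 0 with p·σ < n. Let X ~ Exp(μ, σ/n). Then the function α ↦ E[exp(p(X+α−μ)) − p(X+α−μ) − 1] is finite for every α ∈ ℝ and attains a strict global minimum on ℝ at α₀ = (1/p)·ln((n − p·σ)/n). Thus X + α₀ is the best location equivariant estimator of μ under this Linex-type loss. -/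
open MeasureTheory ProbabilityTheory Real
open scoped ENNReal

section Aux
open Set

lemma tendsto_exp_nb {b : ℝ} (hb : 0 < b) :
    Filter.Tendsto (fun y : ℝ => Real.exp (-(b * y))) Filter.atTop (nhds 0) := by
  have h1 : Filter.Tendsto (fun y : ℝ => b * y) Filter.atTop Filter.atTop :=
    Filter.Tendsto.const_mul_atTop hb Filter.tendsto_id
  have := Real.tendsto_exp_neg_atTop_nhds_zero.comp h1
  simpa [Function.comp_def] using this

lemma intOn_exp {b : ℝ} (hb : 0 < b) :
    IntegrableOn (fun y : ℝ => Real.exp (-(b * y))) (Ioi 0) := by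
  simpa using exp_neg_integrableOn_Ioi 0 hb

lemma intOn_id_exp {b : ℝ} (hb : 0 < b) :
    IntegrableOn (fun y : ℝ => y * Real.exp (-(b * y))) (Ioi 0) := by
  have h := integrableOn_rpow_mul_exp_neg_mul_rpow (s := 1) (p := 1) (by norm_num) (by norm_num) hb
  refine h.congr_fun (fun x hx => ?_) measurableSet_Ioi
  norm_num [Real.rpow_one]

lemma integral_exp_block {b : ℝ} (hb : 0 < b) :
    ∫ y in Ioi (0:ℝ), Real.exp (-(b * y)) = 1 / b := by
  have key := integral_Ioi_of_hasDerivAt_of_tendsto (a := (0:ℝ))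
    (f := fun y => -Real.exp (-(b * y)) / b) (f' := fun y => Real.exp (-(b * y)))
    (m := 0) ?_ ?_ (intOn_exp hb) ?_
  · rw [key]; simp [div_eq_mul_inv]
  · apply Continuous.continuousWithinAt; continuity
  · intro x hx
    have h1 : HasDerivAt (fun y : ℝ => -(b * y)) (-b) x := by
      simpa using ((hasDerivAt_id x).const_mul b).fun_neg
    have h2 := ((h1.exp).fun_neg).div_const b
    convert h2 using 1
    exacts [rfl, by field_simp]
  · have h3 := (tendsto_exp_nb hb).neg.div_const b
    simpa using h3

lemma integral_id_exp_block {b : ℝ} (hb : 0 < b) :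
    ∫ y in Ioi (0:ℝ), y * Real.exp (-(b * y)) = 1 / b ^ 2 := by
  have key := integral_Ioi_of_hasDerivAt_of_tendsto (a := (0:ℝ))
    (f := fun y => -((y / b + 1 / b ^ 2) * Real.exp (-(b * y))))
    (f' := fun y => y * Real.exp (-(b * y)))
    (m := 0) ?_ ?_ (intOn_id_exp hb) ?_
  · rw [key]; simp
  · apply Continuous.continuousWithinAt; continuity
  · intro x hx
    have h1 : HasDerivAt (fun y : ℝ => -(b * y)) (-b) x := by
      simpa using ((hasDerivAt_id x).const_mul b).fun_neg
    have h2 : HasDerivAt (fun y : ℝ => y / b + 1 / b ^ 2) (1 / b) x := by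
      exact ((hasDerivAt_id' (𝕜 := ℝ) (x := x)).div_const b).add_const (1 / b ^ 2)
    have h3 := ((h2.fun_mul h1.exp)).fun_neg
    convert h3 using 1
    field_simp
    ring
  · have h1 : Filter.Tendsto (fun y : ℝ => (y / b + 1 / b ^ 2) * Real.exp (-(b * y)))
        Filter.atTop (nhds 0) := by
      have ha : Filter.Tendsto (fun y : ℝ => y / b * Real.exp (-(b * y)))
          Filter.atTop (nhds 0) := by
        have heq : (fun y : ℝ => y / b * Real.exp (-(b * y)))
            = fun y : ℝ => b⁻¹ * (y * Real.exp (-(b * y))) := by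
          funext y; ring
        rw [heq]
        have hy : Filter.Tendsto (fun y : ℝ => y * Real.exp (-(b * y)))
            Filter.atTop (nhds 0) := by
          have h0 := tendsto_rpow_mul_exp_neg_mul_atTop_nhds_zero 1 b hb
          simp only [rpow_one, neg_mul] at h0
          exact h0
        simpa using hy.const_mul b⁻¹
      have hbx := (tendsto_exp_nb hb).const_mul (1 / b ^ 2)
      have := ha.add hbx
      simpa [add_mul] using this
    simpa using h1.neg

-- main evaluation lemma
lemma risk_eval {Ω : Type*} [MeasurableSpace Ω] (P : Measure Ω) [IsProbabilityMeasure P]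
    {θ : ℝ} (hθ : 0 < θ) {p : ℝ} (hpθ : p * θ < 1) {μ : ℝ}
    {X : Ω → ℝ} (hX : Measurable X)
    (hXlaw : Measure.map X P = expLocMeasure μ θ) (α : ℝ) :
    (∫⁻ ω, ENNReal.ofReal (linexLoss p (X ω + α - μ)) ∂P)
      = ENNReal.ofReal (Real.exp (p * α) / (1 - p * θ) - p * α - p * θ - 1) := by
  have hθ' : θ ≠ 0 := ne_of_gt hθ
  have h1pθ : 0 < 1 - p * θ := by linarith
  have hb : 0 < θ⁻¹ := inv_pos.mpr hθ
  have hc : 0 < θ⁻¹ - p := by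
    rw [sub_pos]
    calc p = (p * θ) * θ⁻¹ := by field_simp
    _ < 1 * θ⁻¹ := by exact mul_lt_mul_of_pos_right hpθ hb
    _ = θ⁻¹ := one_mul _
  -- measurability
  have hLcont : Continuous fun x : ℝ => linexLoss p (x + α - μ) := by
    unfold linexLoss; continuity
  have hmeasf : Measurable fun x : ℝ => ENNReal.ofReal (linexLoss p (x + α - μ)) :=
    ENNReal.measurable_ofReal.comp hLcont.measurable
  have hdens : Measurable fun x : ℝ =>
      ENNReal.ofReal (if μ < x then θ⁻¹ * Real.exp (-(x - μ) / θ) else 0) := by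
    apply ENNReal.measurable_ofReal.comp
    apply Measurable.ite measurableSet_Ioi
    · exact (by continuity : Continuous fun x : ℝ => θ⁻¹ * Real.exp (-(x - μ) / θ)).measurable
    · exact measurable_const
  rw [← lintegral_map hmeasf hX, hXlaw, expLocMeasure,
    lintegral_withDensity_eq_lintegral_mul _ hdens hmeasf]
  -- rewrite integrand as indicator
  have hind : (fun x : ℝ =>
        (ENNReal.ofReal (if μ < x then θ⁻¹ * Real.exp (-(x - μ) / θ) else 0)) *
          ENNReal.ofReal (linexLoss p (x + α - μ)))
      = (Ioi μ).indicator (fun x =>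
          ENNReal.ofReal ((θ⁻¹ * Real.exp (-(x - μ) / θ)) * linexLoss p (x + α - μ))) := by
    funext x
    simp only [Set.indicator_apply, mem_Ioi]
    by_cases hx : μ < x
    · rw [if_pos hx, if_pos hx, ← ENNReal.ofReal_mul (by positivity)]
    · rw [if_neg hx, if_neg hx]; simp
  simp only [Pi.mul_apply]
  rw [hind]
  refine Eq.trans (lintegral_indicator (μ := volume)
    (f := fun x => ENNReal.ofReal (θ⁻¹ * Real.exp (-(x - μ) / θ) * linexLoss p (x + α - μ)))
    measurableSet_Ioi) ?_
  -- translate by μ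
  have htrans := (measurePreserving_add_right (volume : Measure ℝ) μ).setLIntegral_comp_preimage_emb
    (measurableEmbedding_addRight μ)
    (fun x => ENNReal.ofReal ((θ⁻¹ * Real.exp (-(x - μ) / θ)) * linexLoss p (x + α - μ))) (Ioi μ)
  have hpre : (fun y : ℝ => y + μ) ⁻¹' (Ioi μ) = Ioi 0 := by
    ext y; simp
  rw [hpre] at htrans
  rw [← htrans]
  have hsimp : ∀ y : ℝ, (θ⁻¹ * Real.exp (-(y + μ - μ) / θ)) * linexLoss p (y + μ + α - μ)
      = θ⁻¹ * Real.exp (-(θ⁻¹ * y)) * linexLoss p (y + α) := by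
    intro y
    have : y + μ - μ = y := by ring
    rw [this, show y + μ + α - μ = y + α by ring]
    congr 2
    rw [neg_div, div_eq_inv_mul]
  simp only [hsimp]
  -- convert to real integral
  set G : ℝ → ℝ := fun y => θ⁻¹ * Real.exp (-(θ⁻¹ * y)) * linexLoss p (y + α) with hG
  have hGrw : G = fun y => (θ⁻¹ * Real.exp (p * α)) * Real.exp (-((θ⁻¹ - p) * y))
      - (θ⁻¹ * p) * (y * Real.exp (-(θ⁻¹ * y)))
      - (θ⁻¹ * (p * α + 1)) * Real.exp (-(θ⁻¹ * y)) := by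
    funext y
    simp only [hG, linexLoss]
    rw [show -((θ⁻¹ - p) * y) = p * y + -(θ⁻¹ * y) by ring, Real.exp_add,
      show p * (y + α) = p * y + p * α by ring, Real.exp_add]
    ring
  have hInt : IntegrableOn G (Ioi 0) := by
    rw [hGrw]
    exact (((intOn_exp hc).const_mul _).sub ((intOn_id_exp hb).const_mul _)).sub
      ((intOn_exp hb).const_mul _)
  have hnn : 0 ≤ᵐ[volume.restrict (Ioi (0:ℝ))] G := by
    refine Filter.Eventually.of_forall fun y => ?_
    have h0 : 0 ≤ linexLoss p (y + α) := by
      simp only [linexLoss, sub_nonneg]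
      have := Real.add_one_le_exp (p * (y + α))
      linarith
    have : 0 ≤ θ⁻¹ * Real.exp (-(θ⁻¹ * y)) := by positivity
    exact mul_nonneg this h0
  rw [← ofReal_integral_eq_lintegral_ofReal hInt hnn]
  congr 1
  rw [hGrw]
  have hA : IntegrableOn (fun y : ℝ => θ⁻¹ * Real.exp (p * α) * Real.exp (-((θ⁻¹ - p) * y)))
      (Ioi 0) := (intOn_exp hc).const_mul _
  have hB : IntegrableOn (fun y : ℝ => θ⁻¹ * p * (y * Real.exp (-(θ⁻¹ * y)))) (Ioi 0) :=
    (intOn_id_exp hb).const_mul _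
  have hC : IntegrableOn (fun y : ℝ => θ⁻¹ * (p * α + 1) * Real.exp (-(θ⁻¹ * y))) (Ioi 0) :=
    (intOn_exp hb).const_mul _
  have hAB : IntegrableOn (fun y : ℝ => θ⁻¹ * Real.exp (p * α) * Real.exp (-((θ⁻¹ - p) * y))
      - θ⁻¹ * p * (y * Real.exp (-(θ⁻¹ * y)))) (Ioi 0) := hA.sub hB
  rw [integral_sub hAB hC, integral_sub hA hB,
    integral_const_mul, integral_const_mul, integral_const_mul,
    integral_exp_block hc, integral_id_exp_block hb, integral_exp_block hb]
  have h1 : (1:ℝ) - p * θ ≠ 0 := ne_of_gt h1pθ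
  have hcne : θ⁻¹ - p ≠ 0 := ne_of_gt hc
  have e1 : 1 / (θ⁻¹ - p) = θ / (1 - p * θ) := by
    rw [div_eq_div_iff hcne h1]
    field_simp
  have e2 : 1 / (θ⁻¹) ^ 2 = θ ^ 2 := by rw [one_div, inv_pow, inv_inv]
  have e3 : 1 / θ⁻¹ = θ := by rw [one_div, inv_inv]
  rw [e1, e2, e3]
  field_simp
  ring

end Aux

open Set

/-- For `X ~ Exp(μ, σ/n)` with `p·σ < n`, the risk `α ↦ E[exp(p(X+α−μ)) −
p(X+α−μ) − 1]` is finite everywhere and uniquely minimized at `α₀ = (1/p)·ln((n−pσ)/n)`. -/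
theorem stmt_4 {Ω : Type*} [MeasurableSpace Ω] (P : Measure Ω) [IsProbabilityMeasure P]
    (n : ℕ) (hn : 0 < n) (σ : ℝ) (hσ : 0 < σ) (μ : ℝ)
    (p : ℝ) (hp : p ≠ 0) (hpσ : p * σ < n)
    (X : Ω → ℝ) (hX : Measurable X)
    (hXlaw : Measure.map X P = expLocMeasure μ (σ / n)) :
    (∀ α : ℝ, (∫⁻ ω, ENNReal.ofReal (linexLoss p (X ω + α - μ)) ∂P) ≠ ⊤) ∧
    (∀ α : ℝ, α ≠ (1 / p) * Real.log (((n : ℝ) - p * σ) / n) →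
      (∫⁻ ω, ENNReal.ofReal
          (linexLoss p (X ω + (1 / p) * Real.log (((n : ℝ) - p * σ) / n) - μ)) ∂P) <
        ∫⁻ ω, ENNReal.ofReal (linexLoss p (X ω + α - μ)) ∂P) := by
  have hn' : (0:ℝ) < n := Nat.cast_pos.mpr hn
  set θ : ℝ := σ / n with hθdef
  have hθ : 0 < θ := div_pos hσ hn'
  have hpθ : p * θ < 1 := by
    rw [hθdef, mul_div_assoc']
    exact (div_lt_one hn').mpr hpσ
  have h1pθ : 0 < 1 - p * θ := by linarith
  have h1 : (1:ℝ) - p * θ ≠ 0 := ne_of_gt h1pθ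
  have heval := risk_eval P hθ hpθ hX hXlaw
  set α₀ : ℝ := (1 / p) * Real.log (((n : ℝ) - p * σ) / n) with hα₀def
  have hfrac : ((n:ℝ) - p * σ) / n = 1 - p * θ := by
    rw [hθdef]
    field_simp
  have hpα₀ : p * α₀ = Real.log (1 - p * θ) := by
    rw [hα₀def, hfrac]
    field_simp
  have hexp₀ : Real.exp (p * α₀) = 1 - p * θ := by
    rw [hpα₀, Real.exp_log h1pθ]
  refine ⟨fun α => by rw [heval α]; exact ENNReal.ofReal_ne_top, fun α hα => ?_⟩
  rw [heval α, heval α₀]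
  have hg₀ : Real.exp (p * α₀) / (1 - p * θ) - p * α₀ - p * θ - 1
      = -Real.log (1 - p * θ) - p * θ := by
    rw [hexp₀, div_self h1, hpα₀]; ring
  have h0 : 0 ≤ Real.exp (p * α₀) / (1 - p * θ) - p * α₀ - p * θ - 1 := by
    rw [hg₀]
    have := Real.log_le_sub_one_of_pos h1pθ
    linarith
  have ht : p * (α - α₀) ≠ 0 := mul_ne_zero hp (sub_ne_zero.mpr hα)
  have hEt : Real.exp (p * α) = (1 - p * θ) * Real.exp (p * (α - α₀)) := by
    rw [← hexp₀, ← Real.exp_add]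
    congr 1
    ring
  have hdiv : Real.exp (p * α) / (1 - p * θ) = Real.exp (p * (α - α₀)) := by
    rw [hEt, mul_div_cancel_left₀ _ h1]
  have key := Real.add_one_lt_exp ht
  have hts : p * (α - α₀) = p * α - p * α₀ := by ring
  have hlt : Real.exp (p * α₀) / (1 - p * θ) - p * α₀ - p * θ - 1
      < Real.exp (p * α) / (1 - p * θ) - p * α - p * θ - 1 := by
    rw [hdiv, hexp₀, div_self h1]
    linarith [key, hts]
  exact (ENNReal.ofReal_lt_ofReal_iff (lt_of_le_of_lt h0 hlt)).mpr hlt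
end

section
/- Let q > 0, σ > 0, μ₀, μ ∈ ℝ, and p ≠ 0 with p < q·σ, and let Z ~ Exp(μ₀, 1/q). Then the function ψ ↦ E[exp(p(Z + ψ − μ)/σ) − p(Z + ψ − μ)/σ − 1] is finite for every ψ ∈ ℝ and attains a strict global minimum on ℝ at ψ* = μ − μ₀ + (σ/p)·ln((σ·q − p)/(σ·q)). -/
open MeasureTheory ProbabilityTheory Real
open scoped ENNReal

open Set in
lemma stmt18_risk_eq {Ω : Type*} [MeasurableSpace Ω] (P : Measure Ω)
    (q σ : ℝ) (hq : 0 < q) (hσ : 0 < σ) (μ₀ μ : ℝ)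
    (p : ℝ) (hpq : p < q * σ)
    (Z : Ω → ℝ) (hZ : Measurable Z)
    (hZlaw : Measure.map Z P = expLocMeasure μ₀ (1 / q)) (ψ : ℝ) :
    linexRisk P p μ σ (fun ω => Z ω + ψ) =
      ENNReal.ofReal (Real.exp (p/σ*(μ₀+ψ-μ)) * (q/(q - p/σ))
        - (p/σ)/q - p/σ*(μ₀+ψ-μ) - 1) := by
  set a : ℝ := p / σ with ha_def
  have haq : a < q := (div_lt_iff₀ hσ).mpr (by linarith)
  have hqa : 0 < q - a := by linarith
  set d : ℝ := a * (μ₀ + ψ - μ) with hd_def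
  set f : ℝ → ℝ := fun x => linexLoss p ((x + ψ - μ) / σ) with hf_def
  have hkey : ∀ x : ℝ, p * ((x + ψ - μ) / σ) = a * (x + ψ - μ) := by
    intro x; rw [ha_def]; field_simp
  have hf_nonneg : ∀ x, 0 ≤ f x := by
    intro x
    have := Real.add_one_le_exp (p * ((x + ψ - μ) / σ))
    simp only [hf_def, linexLoss]; linarith
  have hf_cont : Continuous f := by
    simp only [hf_def, linexLoss]; fun_prop
  -- step 1 : push forward
  have h1 : linexRisk P p μ σ (fun ω => Z ω + ψ)
      = ∫⁻ x, ENNReal.ofReal (f x) ∂(expLocMeasure μ₀ (1/q)) := by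
    rw [← hZlaw, lintegral_map (hf_cont.measurable.ennreal_ofReal) hZ]
    simp only [linexRisk, hf_def]
  -- step 2 : density
  have hw : Measurable fun x : ℝ =>
      ENNReal.ofReal (if μ₀ < x then (1/q : ℝ)⁻¹ * Real.exp (-(x - μ₀) / (1/q)) else 0) := by
    refine Measurable.ennreal_ofReal ?_
    exact Measurable.ite measurableSet_Ioi (by fun_prop) measurable_const
  set F : ℝ → ℝ := fun x => q * Real.exp (-(q * (x - μ₀))) * f x with hF_def
  have hF_nonneg : ∀ x, 0 ≤ F x := fun x => by
    have := hf_nonneg x; positivity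
  have h2 : ∫⁻ x, ENNReal.ofReal (f x) ∂(expLocMeasure μ₀ (1/q))
      = ∫⁻ x in Ioi μ₀, ENNReal.ofReal (F x) := by
    rw [expLocMeasure, lintegral_withDensity_eq_lintegral_mul _ hw
      hf_cont.measurable.ennreal_ofReal]
    rw [← lintegral_indicator (measurableSet_Ioi)]
    congr 1; funext x
    simp only [Pi.mul_apply, Set.indicator_apply, mem_Ioi]
    by_cases hx : μ₀ < x
    · simp only [if_pos hx]
      rw [← ENNReal.ofReal_mul (by positivity)]
      congr 1
      have h1q : ((1:ℝ)/q)⁻¹ = q := by field_simp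
      have h2q : (-(x - μ₀) / (1/q)) = -(q * (x - μ₀)) := by field_simp
      rw [h1q, h2q, hF_def]
    · simp [if_neg hx]
  -- the shifted integrand as explicit combination
  have hpt : ∀ y : ℝ, F (y + μ₀)
      = (Real.exp d * q) * Real.exp (-((q-a)*y)) - (a*q) * (y * Real.exp (-(q*y)))
        - ((d+1)*q) * Real.exp (-(q*y)) := by
    intro y
    simp only [hF_def, hf_def, linexLoss, hkey]
    have e1 : a * (y + μ₀ + ψ - μ) = a*y + d := by rw [hd_def]; ring
    have e2 : -(q * (y + μ₀ - μ₀)) = -(q*y) := by ring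
    rw [e1, e2, Real.exp_add, show -((q-a)*y) = a*y + -(q*y) by ring, Real.exp_add]
    ring
  -- integrability pieces
  have i1 : IntegrableOn (fun y : ℝ => Real.exp (-((q-a)*y))) (Ioi 0) :=
    (exp_neg_integrableOn_Ioi 0 hqa).congr_fun (fun y _ => by simp only [neg_mul]) measurableSet_Ioi
  have i2 : IntegrableOn (fun y : ℝ => y * Real.exp (-(q*y))) (Ioi 0) := by
    simpa [Real.rpow_one, neg_mul] using
      integrableOn_rpow_mul_exp_neg_mul_rpow (by norm_num : (-1:ℝ) < 1) (by norm_num : (0:ℝ) < 1) hq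
  have i3 : IntegrableOn (fun y : ℝ => Real.exp (-(q*y))) (Ioi 0) :=
    (exp_neg_integrableOn_Ioi 0 hq).congr_fun (fun y _ => by simp only [neg_mul]) measurableSet_Ioi
  have hcomb : IntegrableOn (fun y : ℝ => F (y + μ₀)) (Ioi 0) := by
    have : (fun y : ℝ => F (y + μ₀)) = fun y =>
        (Real.exp d * q) * Real.exp (-((q-a)*y)) - (a*q) * (y * Real.exp (-(q*y)))
          - ((d+1)*q) * Real.exp (-(q*y)) := funext hpt
    rw [this]
    exact ((i1.const_mul _).sub (i2.const_mul _)).sub (i3.const_mul _)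
  -- transfer to Ioi μ₀
  have hmp := (measurePreserving_add_right volume μ₀)
  have hemb := (MeasurableEquiv.addRight μ₀).measurableEmbedding
  have hpre : (fun x : ℝ => x + μ₀) ⁻¹' Ioi μ₀ = Ioi 0 := by
    ext x; simp
  have hF_int : IntegrableOn F (Ioi μ₀) := by
    have h := (hmp.restrict_preimage_emb hemb (Ioi μ₀)).integrable_comp_emb hemb (g := F)
    rw [hpre] at h
    exact h.mp hcomb
  have h3 : ∫⁻ x in Ioi μ₀, ENNReal.ofReal (F x)
      = ENNReal.ofReal (∫ x in Ioi μ₀, F x) :=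
    (ofReal_integral_eq_lintegral_ofReal hF_int
      (Filter.Eventually.of_forall hF_nonneg)).symm
  -- compute the integral
  have hshift : ∫ x in Ioi μ₀, F x = ∫ y in Ioi 0, F (y + μ₀) := by
    have h := hmp.setIntegral_preimage_emb hemb F (Ioi μ₀)
    rw [hpre] at h
    exact h.symm
  have v1 : ∫ y in Ioi (0:ℝ), Real.exp (-((q-a)*y)) = 1/(q-a) := by
    have h := Real.integral_rpow_mul_exp_neg_mul_Ioi (by norm_num : (0:ℝ) < 1) hqa
    simpa [Real.rpow_one] using h
  have v2 : ∫ y in Ioi (0:ℝ), y * Real.exp (-(q*y)) = 1/q^2 := by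
    have h := Real.integral_rpow_mul_exp_neg_mul_Ioi (by norm_num : (0:ℝ) < 2) hq
    rw [show (2:ℝ)-1 = 1 by norm_num] at h
    simp only [Real.rpow_one, Real.Gamma_ofNat_eq_factorial] at h
    rw [h, show ((1:ℝ)/q) ^ (2:ℝ) = (1/q)^(2:ℕ) by rw [← Real.rpow_natCast]; norm_num]
    simp [div_pow]
  have v3 : ∫ y in Ioi (0:ℝ), Real.exp (-(q*y)) = 1/q := by
    have h := Real.integral_rpow_mul_exp_neg_mul_Ioi (by norm_num : (0:ℝ) < 1) hq
    simpa [Real.rpow_one] using h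
  have hval : ∫ y in Ioi 0, F (y + μ₀)
      = Real.exp d * (q/(q-a)) - a/q - d - 1 := by
    have I1 : Integrable (fun y : ℝ => (Real.exp d * q) * Real.exp (-((q-a)*y)))
        (volume.restrict (Ioi 0)) := i1.const_mul _
    have I2 : Integrable (fun y : ℝ => (a*q) * (y * Real.exp (-(q*y))))
        (volume.restrict (Ioi 0)) := i2.const_mul _
    have I3 : Integrable (fun y : ℝ => ((d+1)*q) * Real.exp (-(q*y)))
        (volume.restrict (Ioi 0)) := i3.const_mul _
    have I12 : Integrable (fun y : ℝ => (Real.exp d * q) * Real.exp (-((q-a)*y))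
        - (a*q) * (y * Real.exp (-(q*y)))) (volume.restrict (Ioi 0)) := I1.sub I2
    simp only [hpt]
    rw [integral_sub I12 I3, integral_sub I1 I2,
      integral_const_mul, integral_const_mul, integral_const_mul, v1, v2, v3]
    field_simp
    ring
  rw [h1, h2, h3, hshift, hval]

/-- For `Z ~ Exp(μ₀, 1/q)` with `p < q·σ`, the Linex risk at `(μ, σ)` of
`Z + ψ` is finite for all `ψ` and uniquely minimized at
`ψ* = μ − μ₀ + (σ/p)·ln((σq − p)/(σq))`. -/
theorem stmt_18 {Ω : Type*} [MeasurableSpace Ω] (P : Measure Ω) [IsProbabilityMeasure P]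
    (q σ : ℝ) (hq : 0 < q) (hσ : 0 < σ) (μ₀ μ : ℝ)
    (p : ℝ) (hp : p ≠ 0) (hpq : p < q * σ)
    (Z : Ω → ℝ) (hZ : Measurable Z)
    (hZlaw : Measure.map Z P = expLocMeasure μ₀ (1 / q)) :
    (∀ ψ : ℝ, linexRisk P p μ σ (fun ω => Z ω + ψ) ≠ ⊤) ∧
    (∀ ψ : ℝ, ψ ≠ μ - μ₀ + (σ / p) * Real.log ((σ * q - p) / (σ * q)) →
      linexRisk P p μ σ
          (fun ω => Z ω + (μ - μ₀ + (σ / p) * Real.log ((σ * q - p) / (σ * q)))) <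
        linexRisk P p μ σ (fun ω => Z ω + ψ)) := by
  have hR : ∀ ψ : ℝ, linexRisk P p μ σ (fun ω => Z ω + ψ) =
      ENNReal.ofReal (Real.exp (p/σ*(μ₀+ψ-μ)) * (q/(q - p/σ))
        - (p/σ)/q - p/σ*(μ₀+ψ-μ) - 1) :=
    fun ψ => stmt18_risk_eq P q σ hq hσ μ₀ μ p hpq Z hZ hZlaw ψ
  set a : ℝ := p / σ with ha_def
  have haq : a < q := (div_lt_iff₀ hσ).mpr (by linarith)
  have hqa : 0 < q - a := by linarith
  have ha : a ≠ 0 := div_ne_zero hp hσ.ne'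
  set ψs : ℝ := μ - μ₀ + (σ / p) * Real.log ((σ * q - p) / (σ * q)) with hψs
  have hfrac : (σ * q - p) / (σ * q) = (q - a)/q := by
    rw [ha_def, div_eq_div_iff (by positivity) hq.ne']
    field_simp
  have hasp : a * (σ/p) = 1 := by rw [ha_def]; field_simp
  have hds : a*(μ₀+ψs-μ) = Real.log ((q-a)/q) :=
    calc a*(μ₀+ψs-μ) = (a*(σ/p)) * Real.log ((σ*q-p)/(σ*q)) := by rw [hψs]; ring
    _ = Real.log ((q-a)/q) := by rw [hasp, one_mul, hfrac]
  have hexp : Real.exp (a*(μ₀+ψs-μ)) = (q-a)/q := by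
    rw [hds, Real.exp_log (by positivity)]
  have hKexp : Real.exp (a*(μ₀+ψs-μ)) * (q/(q-a)) = 1 := by
    rw [hexp]; field_simp
  have hnn : 0 ≤ Real.exp (a*(μ₀+ψs-μ)) * (q/(q-a)) - a/q - a*(μ₀+ψs-μ) - 1 := by
    rw [hKexp, hds]
    have h1 := Real.log_le_sub_one_of_pos (show (0:ℝ) < (q-a)/q by positivity)
    have h2 : (q-a)/q - 1 = -(a/q) := by field_simp; ring
    linarith
  constructor
  · intro ψ
    rw [hR ψ]
    exact ENNReal.ofReal_ne_top
  · intro ψ hψ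
    rw [hR ψ, hR ψs]
    refine (ENNReal.ofReal_lt_ofReal_iff_of_nonneg hnn).mpr ?_
    set d : ℝ := a*(μ₀+ψ-μ) with hd
    set ds : ℝ := a*(μ₀+ψs-μ) with hds'
    have hne : d - ds ≠ 0 := by
      have h : d - ds = a * (ψ - ψs) := by rw [hd, hds']; ring
      rw [h]
      exact mul_ne_zero ha (sub_ne_zero.mpr hψ)
    have hlt := Real.add_one_lt_exp hne
    have hKd : Real.exp d * (q/(q-a)) = Real.exp (d - ds) := by
      have h1 : q/(q-a) = Real.exp (-ds) := by
        rw [Real.exp_neg, hds', hexp, inv_div]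
      rw [h1, ← Real.exp_add]
      ring_nf
    rw [hKd, hKexp]
    linarith
end
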